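/- Let d ≥ 1 and let s ≥ s₀ > d/2 be real numbers. There exists a constant C ≥ 1, depending only on d, s and s₀, such that for every integer m ≥ 3, every real N ≥ 1, and every function f : ℤ^d → [0,∞) with f(a) = 0 whenever ⟨a⟩ > N and ‖f‖_s < ∞, one has (Σ_{ℓ∈ℤ^d, ⟨ℓ⟩>N} ⟨ℓ⟩^{2s₀} (f^{⋆(m−1)}(ℓ))²)^{1/2} ≤ C^{m} N^{s₀−s} ‖f‖_s^{m−1}. (High-frequency output of a purely low-frequency convolution gains a factor N^{s₀−s}, because the zero-momentum condition forces one large low mode.) -/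

import Mathlib

/-- Japanese bracket `⟨a⟩ = (1+|a|²)^{1/2}` for `a ∈ ℤ^d`. -/
noncomputable def jap {d : ℕ} (a : Fin d → ℤ) : ℝ :=
  Real.sqrt (1 + ∑ i, ((a i : ℝ)) ^ 2)


section basics
variable {d : ℕ}

lemma jap_arg_nonneg (a : Fin d → ℤ) : (0:ℝ) ≤ 1 + ∑ i, ((a i : ℝ)) ^ 2 := by positivity

lemma one_le_jap (a : Fin d → ℤ) : 1 ≤ jap a := by
  have h : (0:ℝ) ≤ ∑ i, ((a i : ℝ)) ^ 2 := by positivity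
  have := Real.sqrt_le_sqrt (show (1:ℝ) ≤ 1 + ∑ i, ((a i : ℝ)) ^ 2 by linarith)
  simpa [jap] using this

lemma jap_nonneg (a : Fin d → ℤ) : 0 ≤ jap a := Real.sqrt_nonneg _
lemma jap_pos (a : Fin d → ℤ) : 0 < jap a := lt_of_lt_of_le one_pos (one_le_jap a)

lemma sq_jap (a : Fin d → ℤ) : jap a ^ 2 = 1 + ∑ i, ((a i : ℝ)) ^ 2 :=
  Real.sq_sqrt (jap_arg_nonneg a)

lemma jap_zero : jap (0 : Fin d → ℤ) = 1 := by simp [jap]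

lemma sqrt_sum_sq_le_jap (a : Fin d → ℤ) : Real.sqrt (∑ i, ((a i : ℝ)) ^ 2) ≤ jap a :=
  Real.sqrt_le_sqrt (by linarith [jap_arg_nonneg a])

lemma jap_add_le (a b : Fin d → ℤ) : jap (a + b) ≤ jap a + jap b := by
  have h2 : (0:ℝ) ≤ jap a + jap b := by linarith [jap_nonneg a, jap_nonneg b]
  have hcs : ∑ i, ((a i : ℝ)) * ((b i : ℝ)) ≤ jap a * jap b := by
    have h1 : (∑ i, ((a i : ℝ)) * ((b i : ℝ))) ^ 2 ≤
        (∑ i, ((a i : ℝ)) ^ 2) * (∑ i, ((b i : ℝ)) ^ 2) :=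
      Finset.sum_mul_sq_le_sq_mul_sq _ _ _
    calc ∑ i, ((a i : ℝ)) * ((b i : ℝ))
        ≤ |∑ i, ((a i : ℝ)) * ((b i : ℝ))| := le_abs_self _
      _ = Real.sqrt ((∑ i, ((a i : ℝ)) * ((b i : ℝ))) ^ 2) := (Real.sqrt_sq_eq_abs _).symm
      _ ≤ Real.sqrt ((∑ i, ((a i : ℝ)) ^ 2) * (∑ i, ((b i : ℝ)) ^ 2)) := Real.sqrt_le_sqrt h1
      _ = Real.sqrt (∑ i, ((a i : ℝ)) ^ 2) * Real.sqrt (∑ i, ((b i : ℝ)) ^ 2) :=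
          Real.sqrt_mul (by positivity) _
      _ ≤ jap a * jap b := by
          exact mul_le_mul (sqrt_sum_sq_le_jap a) (sqrt_sum_sq_le_jap b)
            (Real.sqrt_nonneg _) (jap_nonneg a)
  have hexp : ∑ i, (((a + b) i : ℝ)) ^ 2
      = (∑ i, ((a i : ℝ))^2) + 2 * (∑ i, ((a i:ℝ))*((b i:ℝ))) + (∑ i, ((b i:ℝ))^2) := by
    rw [Finset.mul_sum, ← Finset.sum_add_distrib, ← Finset.sum_add_distrib]
    apply Finset.sum_congr rfl; intro i _
    simp only [Pi.add_apply]
    push_cast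
    ring
  have hsq : 1 + ∑ i, (((a + b) i : ℝ)) ^ 2 ≤ (jap a + jap b) ^ 2 := by
    have e : (jap a + jap b) ^ 2 = jap a ^ 2 + 2 * (jap a * jap b) + jap b ^ 2 := by ring
    rw [e, sq_jap, sq_jap, hexp]; linarith
  calc jap (a + b) = Real.sqrt (1 + ∑ i, (((a + b) i : ℝ)) ^ 2) := rfl
    _ ≤ Real.sqrt ((jap a + jap b) ^ 2) := Real.sqrt_le_sqrt hsq
    _ = jap a + jap b := by rw [Real.sqrt_sq h2]

lemma jap_sub_le (ℓ b : Fin d → ℤ) : jap ℓ ≤ jap b + jap (ℓ - b) := by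
  simpa using jap_add_le b (ℓ - b)

lemma abs_coord_le_jap (a : Fin d → ℤ) (i : Fin d) : |(a i : ℝ)| ≤ jap a := by
  have h1 : ((a i : ℝ)) ^ 2 ≤ 1 + ∑ j, ((a j : ℝ)) ^ 2 := by
    have : ((a i : ℝ)) ^ 2 ≤ ∑ j, ((a j : ℝ)) ^ 2 :=
      Finset.single_le_sum (f := fun j => ((a j:ℝ))^2) (fun j _ => by positivity)
        (Finset.mem_univ i)
    linarith
  calc |(a i : ℝ)| = Real.sqrt (((a i : ℝ)) ^ 2) := (Real.sqrt_sq_eq_abs _).symm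
    _ ≤ jap a := Real.sqrt_le_sqrt h1

lemma finite_japLE (R : ℝ) : {a : Fin d → ℤ | jap a ≤ R}.Finite := by
  apply Set.Finite.subset (Set.finite_Icc (fun _ : Fin d => -(⌈R⌉)) (fun _ => ⌈R⌉))
  intro a ha
  simp only [Set.mem_setOf_eq] at ha
  constructor <;> intro i <;>
  · have h := (abs_coord_le_jap a i).trans ha
    have : |(a i : ℝ)| ≤ (⌈R⌉ : ℝ) := h.trans (Int.le_ceil R)
    rw [← Int.cast_abs, Int.cast_le] at this
    simp only [Pi.neg_apply]
    cases' abs_le.mp this with h1 h2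
    first | exact h1 | exact h2

end basics


/-- Convolution of two functions on `ℤ^d`. -/
noncomputable def conv {d : ℕ} (f g : (Fin d → ℤ) → ℝ) : (Fin d → ℤ) → ℝ :=
  fun a => ∑' b : Fin d → ℤ, f b * g (a - b)

/-- Iterated convolution `f^{⋆k}`, with `f^{⋆0}` the indicator of `{0}`. -/
noncomputable def convIter {d : ℕ} (f : (Fin d → ℤ) → ℝ) : ℕ → (Fin d → ℤ) → ℝ
  | 0 => fun a => if a = 0 then 1 else 0
  | k + 1 => conv (convIter f k) f

/-- Weighted `ℓ²_s` norm of a real-valued sequence on `ℤ^d`. -/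
noncomputable def wnormR {d : ℕ} (s : ℝ) (f : (Fin d → ℤ) → ℝ) : ℝ :=
  Real.sqrt (∑' a : Fin d → ℤ, jap a ^ (2 * s) * (f a) ^ 2)


section convs
variable {d : ℕ}

/-- The finite set of lattice points with `jap ≤ R`. -/
noncomputable def japFinset (d : ℕ) (R : ℝ) : Finset (Fin d → ℤ) :=
  (finite_japLE R).toFinset

lemma mem_japFinset {R : ℝ} {a : Fin d → ℤ} : a ∈ japFinset d R ↔ jap a ≤ R := by
  simp [japFinset]

/-- Functions vanishing outside a jap-ball. -/
def SuppIn {d : ℕ} (f : (Fin d → ℤ) → ℝ) (R : ℝ) : Prop := ∀ a, R < jap a → f a = 0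

lemma SuppIn.mono {f : (Fin d → ℤ) → ℝ} {R R' : ℝ} (h : SuppIn f R) (hRR' : R ≤ R') :
    SuppIn f R' := fun a ha => h a (lt_of_le_of_lt hRR' ha)

lemma SuppIn.zero_of_not_mem {f : (Fin d → ℤ) → ℝ} {R : ℝ} (h : SuppIn f R)
    {a : Fin d → ℤ} (ha : a ∉ japFinset d R) : f a = 0 :=
  h a (lt_of_not_ge (fun hle => ha (mem_japFinset.mpr hle)))

lemma SuppIn.summable {f : (Fin d → ℤ) → ℝ} {R : ℝ} (h : SuppIn f R) : Summable f :=
  summable_of_ne_finset_zero (s := japFinset d R) (fun a ha => h.zero_of_not_mem ha)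

lemma SuppIn.tsum_eq_sum {f : (Fin d → ℤ) → ℝ} {R : ℝ} (h : SuppIn f R) :
    ∑' a, f a = ∑ a ∈ japFinset d R, f a :=
  _root_.tsum_eq_sum (fun a ha => h.zero_of_not_mem ha)

lemma conv_apply_eq_sum {f g : (Fin d → ℤ) → ℝ} {R : ℝ} (hf : SuppIn f R) (a : Fin d → ℤ) :
    conv f g a = ∑ b ∈ japFinset d R, f b * g (a - b) := by
  rw [conv]
  exact tsum_eq_sum (fun b hb => by rw [hf.zero_of_not_mem hb, zero_mul])

lemma conv_suppIn {f g : (Fin d → ℤ) → ℝ} {Rf Rg : ℝ} (hf : SuppIn f Rf) (hg : SuppIn g Rg) :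
    SuppIn (conv f g) (Rf + Rg) := by
  intro a ha
  rw [conv]
  have : ∀ b, f b * g (a - b) = 0 := by
    intro b
    by_cases hb : Rf < jap b
    · rw [hf b hb, zero_mul]
    · push_neg at hb
      have : Rg < jap (a - b) := by
        have := jap_sub_le a b
        linarith
      rw [hg _ this, mul_zero]
  simp [this]

lemma conv_nonneg_pt {f g : (Fin d → ℤ) → ℝ} (hf : ∀ a, 0 ≤ f a) (hg : ∀ a, 0 ≤ g a)
    (a : Fin d → ℤ) : 0 ≤ conv f g a :=
  tsum_nonneg (fun b => mul_nonneg (hf b) (hg _))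

lemma summable_shift (h : (Fin d → ℤ) → ℝ) (c : Fin d → ℤ) (hs : Summable h) :
    Summable (fun b => h (b - c)) := by
  have := (Equiv.subRight c).summable_iff (f := h)
  exact this.mpr hs

lemma tsum_shift (h : (Fin d → ℤ) → ℝ) (c : Fin d → ℤ) :
    ∑' b, h (b - c) = ∑' b, h b := by
  exact (Equiv.subRight c).tsum_eq h

end convs

section swap
variable {d : ℕ}

lemma summable_inner {g h₁ h₂ : (Fin d → ℤ) → ℝ} {R1 : ℝ} (hh1 : SuppIn h₁ R1)
    (a c : Fin d → ℤ) : Summable (fun b => g c * h₁ (b - c) * h₂ (a - b)) := by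
  have hs : Summable (fun b' => g c * h₁ b' * h₂ (a - (b' + c))) :=
    summable_of_ne_finset_zero (s := japFinset d R1)
      (fun b' hb' => by rw [hh1.zero_of_not_mem hb', mul_zero, zero_mul])
  have := summable_shift (fun b' => g c * h₁ b' * h₂ (a - (b' + c))) c hs
  apply this.congr
  intro b
  congr 2
  abel

lemma conv_conv_eq {g h₁ h₂ : (Fin d → ℤ) → ℝ} {R R1 : ℝ}
    (hg : SuppIn g R) (hh1 : SuppIn h₁ R1) (a : Fin d → ℤ) :
    conv (conv g h₁) h₂ a = ∑ c ∈ japFinset d R, ∑' b, g c * h₁ (b - c) * h₂ (a - b) := by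
  have step1 : conv (conv g h₁) h₂ a
      = ∑' b, ∑ c ∈ japFinset d R, g c * h₁ (b - c) * h₂ (a - b) := by
    rw [conv]
    apply tsum_congr
    intro b
    rw [conv_apply_eq_sum hg, Finset.sum_mul]
  rw [step1]
  exact Summable.tsum_finsetSum (fun c _ => summable_inner hh1 a c)

lemma conv_conv_swap {g h₁ h₂ : (Fin d → ℤ) → ℝ} {R R1 R2 : ℝ}
    (hg : SuppIn g R) (hh1 : SuppIn h₁ R1) (hh2 : SuppIn h₂ R2) (a : Fin d → ℤ) :
    conv (conv g h₁) h₂ a = conv (conv g h₂) h₁ a := by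
  rw [conv_conv_eq hg hh1 a, conv_conv_eq hg hh2 a]
  apply Finset.sum_congr rfl
  intro c _
  have e : (Fin d → ℤ) ≃ (Fin d → ℤ) := Equiv.subLeft (a + c)
  have := (Equiv.subLeft (a + c)).tsum_eq (fun b => g c * h₁ (b - c) * h₂ (a - b))
  rw [← this]
  apply tsum_congr
  intro x
  have e1 : (Equiv.subLeft (a + c)) x - c = a - x := by
    simp [Equiv.subLeft]; abel
  have e2 : a - (Equiv.subLeft (a + c)) x = x - c := by
    simp [Equiv.subLeft]; abel
  rw [e1, e2]
  ring

end swap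

section iter
variable {d : ℕ} {f : (Fin d → ℤ) → ℝ} {N : ℝ}

lemma convIter_nonneg (hf : ∀ a, 0 ≤ f a) : ∀ k a, 0 ≤ convIter f k a := by
  intro k
  induction k with
  | zero => intro a; rw [convIter]; positivity
  | succ k ih => intro a; exact conv_nonneg_pt ih hf a

lemma convIter_suppIn (hN : 1 ≤ N) (hf : SuppIn f N) :
    ∀ k, SuppIn (convIter f k) ((k + 1) * N) := by
  intro k
  induction k with
  | zero =>
    intro a ha
    rw [convIter]
    have : a ≠ 0 := by
      intro h
      rw [h, jap_zero] at ha
      push_cast at ha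
      linarith
    simp [this]
  | succ k ih =>
    have := conv_suppIn ih hf
    have he : ((k:ℝ) + 1) * N + N = ((k + 1 : ℕ) + 1 : ℝ) * N := by push_cast; ring
    rw [convIter]
    intro a ha
    exact this a (by rw [he]; exact ha)

lemma convIter_one (a : Fin d → ℤ) : convIter f 1 a = f a := by
  rw [convIter, conv]
  rw [tsum_eq_single 0 (fun b hb => by rw [convIter]; simp [hb])]
  rw [convIter]; simp

end iter

section key
variable {d : ℕ} {f : (Fin d → ℤ) → ℝ} {N : ℝ}

lemma delta_conv (g : (Fin d → ℤ) → ℝ) (a : Fin d → ℤ) :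
    conv (fun b => if b = (0 : Fin d → ℤ) then (1:ℝ) else 0) g a = g a := by
  rw [conv, tsum_eq_single 0 (fun b hb => by simp [hb])]
  simp

lemma key_lemma (hf0 : ∀ a, 0 ≤ f a) (hN : 1 ≤ N) (hf : SuppIn f N) (M : ℝ) :
    ∀ k : ℕ, 1 ≤ k → ∀ ℓ, (k:ℝ) * M < jap ℓ →
      convIter f k ℓ ≤ (k:ℝ) *
        conv (convIter f (k - 1)) (fun b => if M < jap b then f b else 0) ℓ := by
  set fhi : (Fin d → ℤ) → ℝ := fun b => if M < jap b then f b else 0 with hfhi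
  have hfhi0 : ∀ a, 0 ≤ fhi a := fun a => by
    by_cases h : M < jap a <;> simp [hfhi, h, hf0 a]
  have hfhiS : SuppIn fhi N := fun a ha => by
    by_cases h : M < jap a <;> simp [hfhi, h, hf a ha]
  intro k hk1
  induction k, hk1 using Nat.le_induction with
  | base =>
    intro ℓ hℓ
    simp only [Nat.cast_one, one_mul] at hℓ ⊢
    rw [convIter_one]
    rw [show convIter f (1-1) = (fun b => if b = (0 : Fin d → ℤ) then (1:ℝ) else 0) from rfl,
      delta_conv]
    simp [hfhi, hℓ]
  | succ k hk ih =>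
    intro ℓ hℓ
    have hgkS : SuppIn (convIter f k) (((k:ℝ) + 1) * N) := convIter_suppIn hN hf k
    have hgk0 : ∀ a, 0 ≤ convIter f k a := convIter_nonneg hf0 k
    set T := japFinset d (((k:ℝ) + 1) * N) with hT
    have expand : convIter f (k+1) ℓ = ∑ b ∈ T, convIter f k b * f (ℓ - b) := by
      rw [show convIter f (k+1) = conv (convIter f k) f from rfl]
      exact conv_apply_eq_sum hgkS ℓ
    -- the low-support function Q
    have hgk1S : SuppIn (convIter f (k-1)) ((k:ℝ) * N) := by
      have := convIter_suppIn hN hf (k-1)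
      have hc : ((k - 1 : ℕ) : ℝ) + 1 = (k:ℝ) := by
        rw [Nat.cast_sub hk]; push_cast; ring
      rwa [hc] at this
    set Q : (Fin d → ℤ) → ℝ := conv (convIter f (k-1)) fhi with hQ
    have hQS : SuppIn Q (((k:ℝ) + 1) * N) := by
      have := conv_suppIn hgk1S hfhiS
      exact this.mono (by ring_nf; exact le_refl _) |>.mono (le_of_eq (by ring))
    have hQ0 : ∀ a, 0 ≤ Q a := conv_nonneg_pt (convIter_nonneg hf0 _) hfhi0
    -- split the sum
    set P : (Fin d → ℤ) → Prop := fun b => M < jap (ℓ - b) with hP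
    have hsplit := (Finset.sum_filter_add_sum_filter_not T P
      (fun b => convIter f k b * f (ℓ - b))).symm
    have good : ∑ b ∈ T.filter P, convIter f k b * f (ℓ - b)
        ≤ conv (convIter f k) fhi ℓ := by
      rw [conv_apply_eq_sum hgkS ℓ]
      have : ∀ b ∈ T.filter P, convIter f k b * f (ℓ - b)
          = convIter f k b * fhi (ℓ - b) := by
        intro b hb
        have hPb : P b := (Finset.mem_filter.mp hb).2
        rw [hfhi]
        simp only [hP] at hPb
        simp [hPb]
      rw [Finset.sum_congr rfl this]
      apply Finset.sum_le_sum_of_subset_of_nonneg (Finset.filter_subset _ _)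
      intro b _ _
      exact mul_nonneg (hgk0 b) (hfhi0 _)
    have bad : ∑ b ∈ T.filter (fun b => ¬ P b), convIter f k b * f (ℓ - b)
        ≤ (k:ℝ) * conv (convIter f k) fhi ℓ := by
      have step1 : ∀ b ∈ T.filter (fun b => ¬ P b),
          convIter f k b * f (ℓ - b) ≤ (k:ℝ) * (Q b * f (ℓ - b)) := by
        intro b hb
        have hPb : ¬ P b := (Finset.mem_filter.mp hb).2
        simp only [hP, not_lt] at hPb
        have hjb : (k:ℝ) * M < jap b := by
          have h1 := jap_sub_le ℓ b
          have : ((k:ℝ) + 1) * M < jap ℓ := by push_cast at hℓ; linarith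
          nlinarith
        have := ih b hjb
        have h2 : 0 ≤ f (ℓ - b) := hf0 _
        calc convIter f k b * f (ℓ - b) ≤ ((k:ℝ) * Q b) * f (ℓ - b) :=
              mul_le_mul_of_nonneg_right this h2
          _ = (k:ℝ) * (Q b * f (ℓ - b)) := by ring
      calc ∑ b ∈ T.filter (fun b => ¬ P b), convIter f k b * f (ℓ - b)
          ≤ ∑ b ∈ T.filter (fun b => ¬ P b), (k:ℝ) * (Q b * f (ℓ - b)) :=
            Finset.sum_le_sum step1
        _ = (k:ℝ) * ∑ b ∈ T.filter (fun b => ¬ P b), Q b * f (ℓ - b) := by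
            rw [Finset.mul_sum]
        _ ≤ (k:ℝ) * ∑ b ∈ T, Q b * f (ℓ - b) := by
            apply mul_le_mul_of_nonneg_left _ (by positivity)
            apply Finset.sum_le_sum_of_subset_of_nonneg (Finset.filter_subset _ _)
            intro b _ _
            exact mul_nonneg (hQ0 b) (hf0 _)
        _ = (k:ℝ) * conv Q f ℓ := by rw [conv_apply_eq_sum hQS ℓ]
        _ = (k:ℝ) * conv (convIter f k) fhi ℓ := by
            rw [hQ, conv_conv_swap hgk1S hfhiS hf ℓ]
            congr 2
            rw [show conv (convIter f (k-1)) f = convIter f ((k-1)+1) from rfl,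
              Nat.sub_add_cancel hk]
    have hfin : convIter f (k+1) ℓ ≤ (1 + (k:ℝ)) * conv (convIter f k) fhi ℓ := by
      rw [expand, hsplit]
      have := add_le_add good bad
      linarith
    have : ((k+1:ℕ):ℝ) = 1 + (k:ℝ) := by push_cast; ring
    rw [this, show (k+1) - 1 = k from rfl]
    exact hfin

end key

section lone
variable {d : ℕ}

lemma tsum_conv_le {p q : (Fin d → ℤ) → ℝ} {Rp Rq : ℝ}
    (hp0 : ∀ a, 0 ≤ p a) (hq0 : ∀ a, 0 ≤ q a) (hp : SuppIn p Rp) (hq : SuppIn q Rq) :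
    ∑' a, conv p q a ≤ (∑' a, p a) * (∑' a, q a) := by
  have hconv : SuppIn (conv p q) (Rp + Rq) := conv_suppIn hp hq
  rw [hconv.tsum_eq_sum]
  set U := japFinset d (Rp + Rq)
  have expand : ∀ a ∈ U, conv p q a = ∑ b ∈ japFinset d Rp, p b * q (a - b) :=
    fun a _ => conv_apply_eq_sum hp a
  rw [Finset.sum_congr rfl expand, Finset.sum_comm]
  have hstep : ∀ b ∈ japFinset d Rp, ∑ a ∈ U, p b * q (a - b) ≤ p b * (∑' a, q a) := by
    intro b _
    rw [← Finset.mul_sum]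
    apply mul_le_mul_of_nonneg_left _ (hp0 b)
    calc ∑ a ∈ U, q (a - b) ≤ ∑' a, q (a - b) :=
          Summable.sum_le_tsum U (fun a _ => hq0 _) (summable_shift q b hq.summable)
      _ = ∑' a, q a := tsum_shift q b
  calc ∑ b ∈ japFinset d Rp, ∑ a ∈ U, p b * q (a - b)
      ≤ ∑ b ∈ japFinset d Rp, p b * (∑' a, q a) := Finset.sum_le_sum hstep
    _ = (∑ b ∈ japFinset d Rp, p b) * (∑' a, q a) := by rw [Finset.sum_mul]
    _ = (∑' a, p a) * (∑' a, q a) := by rw [hp.tsum_eq_sum]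

lemma tsum_convIter_le {f : (Fin d → ℤ) → ℝ} {N : ℝ} (hf0 : ∀ a, 0 ≤ f a) (hN : 1 ≤ N)
    (hf : SuppIn f N) : ∀ k, ∑' a, convIter f k a ≤ (∑' a, f a) ^ k := by
  intro k
  induction k with
  | zero =>
    rw [show convIter f 0 = (fun a => if a = (0 : Fin d → ℤ) then (1:ℝ) else 0) from rfl]
    rw [tsum_ite_eq (0 : Fin d → ℤ) (fun _ => (1:ℝ))]
    simp
  | succ k ih =>
    have h1 : ∑' a, convIter f (k+1) a ≤ (∑' a, convIter f k a) * (∑' a, f a) :=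
      tsum_conv_le (convIter_nonneg hf0 k) hf0 (convIter_suppIn hN hf k) hf
    have h2 : (0:ℝ) ≤ ∑' a, f a := tsum_nonneg hf0
    calc ∑' a, convIter f (k+1) a ≤ (∑' a, convIter f k a) * (∑' a, f a) := h1
      _ ≤ (∑' a, f a) ^ k * (∑' a, f a) := mul_le_mul_of_nonneg_right ih h2
      _ = (∑' a, f a) ^ (k+1) := by ring

end lone

section lattice

lemma summable_pi_prod {v : ℤ → ℝ} (hv0 : ∀ n, 0 ≤ v n) (hv : Summable v) :
    ∀ n : ℕ, Summable (fun a : Fin n → ℤ => ∏ i, v (a i)) := by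
  intro n
  induction n with
  | zero => exact Summable.of_finite
  | succ n ih =>
    have main : ∀ g : (Fin n → ℤ) → ℝ, (∀ x, 0 ≤ g x) → Summable g →
        Summable (fun a : Fin (n+1) → ℤ => v (a 0) * g (fun i => a i.succ)) := by
      intro g hg0 hg
      have hH : Summable (fun p : ℤ × (Fin n → ℤ) => v p.1 * g p.2) :=
        Summable.mul_of_nonneg hv hg (fun x => hv0 x) (fun x => hg0 x)
      apply (Equiv.summable_iff (Fin.consEquiv (fun _ : Fin (n+1) => ℤ))).mp
      apply hH.congr
      intro p
      simp only [Function.comp_apply, Fin.consEquiv_apply]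
      simp [Fin.cons_zero, Fin.cons_succ]
    have := main (fun a => ∏ i, v (a i)) (fun x => Finset.prod_nonneg (fun i _ => hv0 _)) ih
    apply this.congr
    intro a
    rw [Fin.prod_univ_succ]

lemma summable_coord (t : ℝ) (ht : 1/2 < t) :
    Summable (fun n : ℤ => (1 + (n:ℝ)^2) ^ (-t)) := by
  set w : ℤ → ℝ := fun n => |(n:ℝ)| ^ (-(2*t)) + (if n = 0 then 1 else 0) with hw
  have hwsum : Summable w := by
    apply Summable.add (Real.summable_abs_int_rpow (by linarith))
    exact summable_of_ne_finset_zero (s := {(0:ℤ)}) (fun n hn => by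
      simp at hn; simp [hn])
  apply Summable.of_nonneg_of_le (fun n => Real.rpow_nonneg (by positivity) _) _ hwsum
  intro n
  by_cases hn : n = 0
  · subst hn
    have : -(2*t) ≠ 0 := by intro h; nlinarith [neg_eq_zero.mp h]
    simp [hw, Real.zero_rpow this]
  · have h2 : (1:ℝ) ≤ |(n:ℝ)| := by
      rw [← Int.cast_abs]
      exact_mod_cast Int.one_le_abs hn
    have h1 : (1:ℝ) ≤ (n:ℝ)^2 := by nlinarith [sq_abs (n:ℝ)]
    have key : (1 + (n:ℝ)^2) ^ (-t) ≤ ((n:ℝ)^2) ^ (-t) :=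
      Real.rpow_le_rpow_of_nonpos (by linarith) (by linarith) (by linarith)
    have e1 : ((n:ℝ)^2) ^ (-t) = |(n:ℝ)| ^ (-(2*t)) := by
      rw [← sq_abs, ← Real.rpow_natCast |(n:ℝ)| 2, ← Real.rpow_mul (abs_nonneg _)]
      congr 1
      push_cast
      ring
    have h0 : (0:ℝ) ≤ if n = 0 then (1:ℝ) else 0 := by positivity
    rw [hw]
    simp only []
    rw [← e1]
    linarith [key]

lemma summable_jap_rpow {d : ℕ} (hd : 1 ≤ d) {t : ℝ} (ht : (d:ℝ)/2 < t) :
    Summable (fun a : Fin d → ℤ => jap a ^ (-(2*t))) := by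
  have hd0 : (0:ℝ) < d := by exact_mod_cast hd
  have ht0 : 0 < t := lt_of_le_of_lt (by positivity) ht
  set v : ℤ → ℝ := fun n => (1 + (n:ℝ)^2) ^ (-(t/d)) with hv
  have hv0 : ∀ n, 0 ≤ v n := fun n => Real.rpow_nonneg (by positivity) _
  have hvs : Summable v := summable_coord (t/d) (by rw [lt_div_iff₀ hd0]; linarith)
  have hprod := summable_pi_prod hv0 hvs d
  apply Summable.of_nonneg_of_le (fun a => Real.rpow_nonneg (jap_nonneg a) _) _ hprod
  intro a
  set X : ℝ := 1 + ∑ i, ((a i:ℝ))^2 with hX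
  have hs : (0:ℝ) ≤ ∑ i, ((a i:ℝ))^2 := by positivity
  have hX1 : (1:ℝ) ≤ X := by rw [hX]; linarith
  have hX0 : (0:ℝ) < X := by linarith
  have e0 : jap a ^ (-(2*t)) = X ^ (-t) := by
    rw [jap, Real.sqrt_eq_rpow, ← Real.rpow_mul (by linarith : (0:ℝ) ≤ X)]
    congr 1
    ring
  rw [e0]
  set u : Fin d → ℝ := fun i => 1 + ((a i:ℝ))^2 with hu
  have hu0 : ∀ i, (0:ℝ) < u i := fun i => by positivity
  have amgm : ∏ i, (u i) ^ ((1:ℝ)/d) ≤ X := by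
    have h := Real.geom_mean_le_arith_mean_weighted Finset.univ
      (fun _ : Fin d => (1:ℝ)/d) u (fun i _ => by positivity)
      (by simp [Finset.card_univ]; field_simp) (fun i _ => (hu0 i).le)
    have hc : ∑ i, (1:ℝ)/d * u i ≤ X := by
      rw [← Finset.mul_sum, hu]
      simp only []
      rw [Finset.sum_add_distrib]
      simp only [Finset.sum_const, Finset.card_univ, Fintype.card_fin, nsmul_eq_mul, mul_one]
      rw [hX]
      have hmul := mul_le_mul_of_nonneg_left
        (show (1:ℝ) ≤ (d:ℝ) from by exact_mod_cast hd) hs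
      rw [mul_add, mul_comm]
      have e2 : (1:ℝ)/d * (d:ℝ) = 1 := by field_simp
      have h3 : (1:ℝ)/d * (∑ i, ((a i:ℝ))^2) ≤ ∑ i, ((a i:ℝ))^2 := by
        rw [div_mul_eq_mul_div, one_mul, div_le_iff₀ hd0]
        nlinarith
      calc (d:ℝ) * (1/d) + (1:ℝ)/d * (∑ i, ((a i:ℝ))^2)
          ≤ (d:ℝ) * (1/d) + ∑ i, ((a i:ℝ))^2 := by linarith
        _ = 1 + ∑ i, ((a i:ℝ))^2 := by rw [mul_one_div, div_self (ne_of_gt hd0)]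
    exact le_trans h hc
  have hprodpos : (0:ℝ) < ∏ i, (u i) ^ ((1:ℝ)/d) :=
    Finset.prod_pos (fun i _ => Real.rpow_pos_of_pos (hu0 i) _)
  have step : X ^ (-t) ≤ (∏ i, (u i) ^ ((1:ℝ)/d)) ^ (-t) :=
    Real.rpow_le_rpow_of_nonpos hprodpos amgm (by linarith)
  apply le_trans step
  rw [← Real.finset_prod_rpow Finset.univ _ (fun i _ => (Real.rpow_pos_of_pos (hu0 i) _).le) (-t)]
  apply le_of_eq
  apply Finset.prod_congr rfl
  intro i _
  rw [← Real.rpow_mul (hu0 i).le, hv, hu]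
  congr 1
  ring

end lattice

section estimates
variable {d : ℕ}

lemma wterm_nonneg {d : ℕ} (f : (Fin d → ℤ) → ℝ) (r : ℝ) (a : Fin d → ℤ) :
    0 ≤ jap a ^ r * f a ^ 2 :=
  mul_nonneg (Real.rpow_nonneg (jap_nonneg a) _) (sq_nonneg _)

lemma rpow_sq_eq (x : ℝ) (hx : 0 ≤ x) (r : ℝ) : (x ^ r) ^ (2:ℕ) = x ^ (2 * r) := by
  rw [← Real.rpow_natCast (x ^ r) 2, ← Real.rpow_mul hx]
  congr 1
  push_cast
  ring

/-- Cauchy–Schwarz: `‖f‖₁ ≤ √(∑ ⟨a⟩^{-2s₀}) ⬝ ‖f‖_s`. -/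
lemma tsum_le_sqrt_mul_wnorm {f : (Fin d → ℤ) → ℝ} {N s s₀ : ℝ}
    (hf0 : ∀ a, 0 ≤ f a) (hf : SuppIn f N) (hss₀ : s₀ ≤ s)
    (hsum₀ : Summable (fun a : Fin d → ℤ => jap a ^ (-(2*s₀))))
    (hfs : Summable (fun a => jap a ^ (2*s) * f a ^ 2)) :
    ∑' a, f a ≤ Real.sqrt (∑' a : Fin d → ℤ, jap a ^ (-(2*s₀))) * wnormR s f := by
  set S := japFinset d N with hS
  set K2 : ℝ := ∑' a : Fin d → ℤ, jap a ^ (-(2*s₀)) with hK2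
  have hW2 : wnormR s f ^ 2 = ∑' a, jap a ^ (2*s) * f a ^ 2 := by
    rw [wnormR]
    exact Real.sq_sqrt (tsum_nonneg (wterm_nonneg f (2*s)))
  have h2 : ∀ a, f a = (jap a ^ (-s)) * (jap a ^ s * f a) := by
    intro a
    rw [← mul_assoc, ← Real.rpow_add (jap_pos a), neg_add_cancel, Real.rpow_zero, one_mul]
  have hA : ∑ a ∈ S, (jap a ^ (-s)) ^ 2 ≤ K2 := by
    apply le_trans (Finset.sum_le_sum (f := fun a => (jap a ^ (-s))^2)
      (g := fun a => jap a ^ (-(2*s₀))) ?term)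
    · exact Summable.sum_le_tsum S (fun a _ => Real.rpow_nonneg (jap_nonneg a) _) hsum₀
    case term =>
      intro a _
      show (jap a ^ (-s)) ^ 2 ≤ jap a ^ (-(2*s₀))
      rw [rpow_sq_eq _ (jap_nonneg a)]
      apply Real.rpow_le_rpow_of_exponent_le (one_le_jap a)
      linarith
  have hB : ∑ a ∈ S, (jap a ^ s * f a) ^ 2 ≤ wnormR s f ^ 2 := by
    rw [hW2]
    apply le_trans (le_of_eq (Finset.sum_congr rfl (fun a _ => ?e)))
      (Summable.sum_le_tsum S (fun a _ => wterm_nonneg f (2*s) a) hfs)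
    case e =>
      rw [mul_pow, rpow_sq_eq _ (jap_nonneg a)]
  have hCS : (∑ a ∈ S, f a) ≤ Real.sqrt (∑ a ∈ S, (jap a ^ (-s)) ^ 2) *
      Real.sqrt (∑ a ∈ S, (jap a ^ s * f a) ^ 2) := by
    have hcs := Finset.sum_mul_sq_le_sq_mul_sq S (fun a => jap a ^ (-s))
      (fun a => jap a ^ s * f a)
    have hre : ∑ a ∈ S, (jap a ^ (-s)) * (jap a ^ s * f a) = ∑ a ∈ S, f a :=
      Finset.sum_congr rfl (fun a _ => (h2 a).symm)
    rw [hre] at hcs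
    calc ∑ a ∈ S, f a ≤ |∑ a ∈ S, f a| := le_abs_self _
      _ = Real.sqrt ((∑ a ∈ S, f a)^2) := (Real.sqrt_sq_eq_abs _).symm
      _ ≤ Real.sqrt ((∑ a ∈ S, (jap a ^ (-s))^2) * (∑ a ∈ S, (jap a ^ s * f a)^2)) :=
          Real.sqrt_le_sqrt hcs
      _ = _ := Real.sqrt_mul (Finset.sum_nonneg (fun a _ => sq_nonneg _)) _
  rw [hf.tsum_eq_sum]
  apply le_trans hCS
  apply mul_le_mul
  · exact Real.sqrt_le_sqrt hA
  · calc Real.sqrt (∑ a ∈ S, (jap a ^ s * f a) ^ 2) ≤ Real.sqrt (wnormR s f ^2) :=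
        Real.sqrt_le_sqrt hB
      _ = wnormR s f := Real.sqrt_sq (Real.sqrt_nonneg _)
  · exact Real.sqrt_nonneg _
  · exact Real.sqrt_nonneg _

/-- Young's inequality `‖g ⋆ h‖₂² ≤ ‖g‖₁² ‖h‖₂²` (partial-sum form). -/
lemma sum_sq_conv_le {g h : (Fin d → ℤ) → ℝ} {Rg Rh : ℝ}
    (hg0 : ∀ a, 0 ≤ g a) (hh0 : ∀ a, 0 ≤ h a) (hg : SuppIn g Rg) (hh : SuppIn h Rh)
    (T : Finset (Fin d → ℤ)) :
    ∑ ℓ ∈ T, (conv g h ℓ)^2 ≤ (∑' a, g a)^2 * ∑' a, (h a)^2 := by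
  set Sg := japFinset d Rg with hSg
  have hh2 : SuppIn (fun a => h a ^ 2) Rh := fun a ha => by
    show h a ^ 2 = 0
    rw [hh a ha]; ring
  have hsq : Summable (fun a => h a ^ 2) := hh2.summable
  set H2 : ℝ := ∑' a, (h a)^2 with hH2
  have hH2nn : 0 ≤ H2 := tsum_nonneg (fun a => sq_nonneg _)
  have hCS : ∀ ℓ, (conv g h ℓ)^2 ≤ (∑ b ∈ Sg, g b) * ∑ b ∈ Sg, g b * h (ℓ - b)^2 := by
    intro ℓ
    rw [conv_apply_eq_sum hg ℓ]
    have hcs := Finset.sum_mul_sq_le_sq_mul_sq Sg (fun b => Real.sqrt (g b))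
      (fun b => Real.sqrt (g b) * h (ℓ - b))
    have e1 : ∑ b ∈ Sg, Real.sqrt (g b) * (Real.sqrt (g b) * h (ℓ - b))
        = ∑ b ∈ Sg, g b * h (ℓ - b) := by
      apply Finset.sum_congr rfl
      intro b _
      rw [← mul_assoc, Real.mul_self_sqrt (hg0 b)]
    have e2 : ∑ b ∈ Sg, (Real.sqrt (g b))^2 = ∑ b ∈ Sg, g b :=
      Finset.sum_congr rfl (fun b _ => Real.sq_sqrt (hg0 b))
    have e3 : ∑ b ∈ Sg, (Real.sqrt (g b) * h (ℓ - b))^2 = ∑ b ∈ Sg, g b * h (ℓ - b)^2 := by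
      apply Finset.sum_congr rfl
      intro b _
      rw [mul_pow, Real.sq_sqrt (hg0 b)]
    rw [e1, e2, e3] at hcs
    exact hcs
  calc ∑ ℓ ∈ T, (conv g h ℓ)^2
      ≤ ∑ ℓ ∈ T, (∑ b ∈ Sg, g b) * ∑ b ∈ Sg, g b * h (ℓ - b)^2 :=
        Finset.sum_le_sum (fun ℓ _ => hCS ℓ)
    _ = (∑ b ∈ Sg, g b) * ∑ ℓ ∈ T, ∑ b ∈ Sg, g b * h (ℓ - b)^2 := by rw [Finset.mul_sum]
    _ = (∑ b ∈ Sg, g b) * ∑ b ∈ Sg, g b * ∑ ℓ ∈ T, h (ℓ - b)^2 := by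
        rw [Finset.sum_comm]
        congr 1
        exact Finset.sum_congr rfl (fun b _ => by rw [Finset.mul_sum])
    _ ≤ (∑ b ∈ Sg, g b) * ∑ b ∈ Sg, g b * H2 := by
        apply mul_le_mul_of_nonneg_left _ (Finset.sum_nonneg (fun b _ => hg0 b))
        apply Finset.sum_le_sum
        intro b _
        apply mul_le_mul_of_nonneg_left _ (hg0 b)
        calc ∑ ℓ ∈ T, h (ℓ - b)^2 ≤ ∑' ℓ, h (ℓ - b)^2 :=
              Summable.sum_le_tsum T (fun ℓ _ => sq_nonneg _)
                (summable_shift (fun a => h a ^ 2) b hsq)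
          _ = H2 := tsum_shift (fun a => h a ^ 2) b
    _ = (∑ b ∈ Sg, g b) * ((∑ b ∈ Sg, g b) * H2) := by rw [← Finset.sum_mul]
    _ = (∑' a, g a)^2 * H2 := by rw [hg.tsum_eq_sum]; ring

/-- High-frequency cutoff ℓ² bound. -/
lemma tsum_sq_hi_le {f : (Fin d → ℤ) → ℝ} {N s M : ℝ} (hM : 0 < M) (hs : 0 < s)
    (hf : SuppIn f N)
    (hfs : Summable (fun a => jap a ^ (2*s) * f a ^ 2)) :
    ∑' b, (if M < jap b then f b else 0)^2
      ≤ M ^ (-(2*s)) * ∑' a, jap a ^ (2*s) * f a ^ 2 := by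
  have hsupphi : SuppIn (fun b => (if M < jap b then f b else 0)^2) N := fun a ha => by
    show (if M < jap a then f a else 0)^2 = 0
    rw [hf a ha]; simp
  have hRHS : Summable (fun a => M ^ (-(2*s)) * (jap a ^ (2*s) * f a ^ 2)) :=
    hfs.mul_left _
  rw [← tsum_mul_left]
  apply Summable.tsum_le_tsum _ hsupphi.summable hRHS
  intro b
  by_cases hb : M < jap b
  · simp only [hb, if_true]
    have h1 : (1:ℝ) ≤ M ^ (-(2*s)) * jap b ^ (2*s) := by
      have e1 : M ^ (-(2*s)) * jap b ^ (2*s) = (jap b / M) ^ (2*s) := by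
        rw [Real.div_rpow (jap_nonneg b) hM.le, Real.rpow_neg hM.le]
        ring
      rw [e1]
      apply Real.one_le_rpow _ (by positivity)
      rw [le_div_iff₀ hM]
      linarith
    calc f b ^ 2 = 1 * f b ^ 2 := (one_mul _).symm
      _ ≤ (M ^ (-(2*s)) * jap b ^ (2*s)) * f b ^ 2 :=
          mul_le_mul_of_nonneg_right h1 (sq_nonneg _)
      _ = M ^ (-(2*s)) * (jap b ^ (2*s) * f b ^ 2) := by ring
  · simp only [hb, if_false]
    have : (0:ℝ) ≤ M ^ (-(2*s)) * (jap b ^ (2*s) * f b ^ 2) :=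
      mul_nonneg (Real.rpow_nonneg hM.le _) (wterm_nonneg f (2*s) b)
    simpa using this

end estimates


theorem high_output_of_low_convolution_estimate
    (d : ℕ) (hd : 1 ≤ d) (s s₀ : ℝ) (hs₀ : (d : ℝ) / 2 < s₀) (hss₀ : s₀ ≤ s) :
    ∃ C : ℝ, 1 ≤ C ∧
      ∀ m : ℕ, 3 ≤ m →
        ∀ N : ℝ, 1 ≤ N →
          ∀ f : (Fin d → ℤ) → ℝ,
            (∀ a, 0 ≤ f a) → (∀ a, N < jap a → f a = 0) →
            Summable (fun a => jap a ^ (2 * s) * (f a) ^ 2) →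
            Summable (fun ℓ : Fin d → ℤ =>
              if N < jap ℓ then jap ℓ ^ (2 * s₀) * (convIter f (m - 1) ℓ) ^ 2 else 0) ∧
            Real.sqrt (∑' ℓ : Fin d → ℤ,
                if N < jap ℓ then jap ℓ ^ (2 * s₀) * (convIter f (m - 1) ℓ) ^ 2 else 0)
              ≤ C ^ m * N ^ (s₀ - s) * wnormR s f ^ (m - 1) := by
  have hdR : (1:ℝ) ≤ (d:ℝ) := by exact_mod_cast hd
  have hs₀pos : 0 < s₀ := lt_of_lt_of_le (by linarith) (le_of_lt hs₀)
  have hspos : 0 < s := lt_of_lt_of_le hs₀pos hss₀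
  have hsum₀ : Summable (fun a : Fin d → ℤ => jap a ^ (-(2*s₀))) := summable_jap_rpow hd hs₀
  set K2 : ℝ := ∑' a : Fin d → ℤ, jap a ^ (-(2*s₀)) with hK2
  have hK2one : 1 ≤ K2 := by
    have h0 : jap (0 : Fin d → ℤ) ^ (-(2*s₀)) = 1 := by rw [jap_zero, Real.one_rpow]
    calc (1:ℝ) = jap (0 : Fin d → ℤ) ^ (-(2*s₀)) := h0.symm
      _ ≤ K2 := Summable.le_tsum hsum₀ 0 (fun b _ => Real.rpow_nonneg (jap_nonneg b) _)
  have hK2nn : (0:ℝ) ≤ K2 := by linarith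
  set K : ℝ := Real.sqrt K2 with hKdef
  have hKone : 1 ≤ K := by
    rw [hKdef, show (1:ℝ) = Real.sqrt 1 from Real.sqrt_one.symm]
    exact Real.sqrt_le_sqrt hK2one
  have hKnn : 0 ≤ K := Real.sqrt_nonneg _
  have hKK2 : K ≤ K2 := by
    calc K = Real.sqrt K2 := rfl
      _ ≤ Real.sqrt (K2^2) := Real.sqrt_le_sqrt (by nlinarith)
      _ = K2 := Real.sqrt_sq hK2nn
  set C : ℝ := 2 ^ (s₀ + s + 1) * K2 with hC
  have hC1 : (1:ℝ) ≤ (2:ℝ) ^ (s₀ + s + 1) := Real.one_le_rpow one_le_two (by linarith)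
  have hCone : 1 ≤ C := by nlinarith
  refine ⟨C, hCone, ?_⟩
  intro m hm N hN f hf0 hfN hfs
  set k := m - 1 with hk
  have hk1 : 1 ≤ k := by omega
  have hmk : m = k + 1 := by omega
  have hkR : (1:ℝ) ≤ (k:ℝ) := by exact_mod_cast hk1
  have hkpos : (0:ℝ) < (k:ℝ) := by linarith
  have hNpos : (0:ℝ) < N := lt_of_lt_of_le one_pos hN
  have hfSupp : SuppIn f N := hfN
  set W := wnormR s f with hW
  have hWnn : 0 ≤ W := Real.sqrt_nonneg _
  have hW2 : W^2 = ∑' a, jap a ^ (2*s) * f a^2 :=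
    Real.sq_sqrt (tsum_nonneg (wterm_nonneg f (2*s)))
  have hgS : SuppIn (convIter f k) (((k:ℝ)+1)*N) := convIter_suppIn hN hfSupp k
  have hg0 := convIter_nonneg hf0 k
  set F : (Fin d → ℤ) → ℝ :=
    fun ℓ => if N < jap ℓ then jap ℓ ^ (2*s₀) * (convIter f k ℓ)^2 else 0 with hF
  have hFS : SuppIn F (((k:ℝ)+1)*N) := by
    intro ℓ hℓ
    show (if N < jap ℓ then jap ℓ ^ (2*s₀) * (convIter f k ℓ)^2 else 0) = 0
    rw [hgS ℓ hℓ]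
    by_cases h : N < jap ℓ <;> simp [h]
  have hFsum : Summable F := hFS.summable
  refine ⟨hFsum, ?_⟩
  -- the high-frequency cutoff
  set M : ℝ := N / (k:ℝ) with hM
  have hMpos : 0 < M := by rw [hM]; positivity
  set fhi : (Fin d → ℤ) → ℝ := fun b => if M < jap b then f b else 0 with hfhi
  have hfhi0 : ∀ a, 0 ≤ fhi a := fun a => by
    by_cases h : M < jap a <;> simp [hfhi, h, hf0 a]
  have hfhiS : SuppIn fhi N := fun a ha => by
    by_cases h : M < jap a <;> simp [hfhi, h, hfSupp a ha]
  set g' := convIter f (k-1) with hg'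
  have hg'S : SuppIn g' ((k:ℝ) * N) := by
    have := convIter_suppIn hN hfSupp (k-1)
    have hc : ((k - 1 : ℕ) : ℝ) + 1 = (k:ℝ) := by
      rw [Nat.cast_sub hk1]; push_cast; ring
    rwa [hc] at this
  have hg'0 : ∀ a, 0 ≤ g' a := convIter_nonneg hf0 (k-1)
  have hQ0 : ∀ ℓ, 0 ≤ conv g' fhi ℓ := conv_nonneg_pt hg'0 hfhi0
  have hkey : ∀ ℓ, N < jap ℓ → convIter f k ℓ ≤ (k:ℝ) * conv g' fhi ℓ := by
    intro ℓ hℓ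
    have hc : (k:ℝ) * M = N := by rw [hM]; field_simp
    exact key_lemma hf0 hN hfSupp M k hk1 ℓ (by rw [hc]; exact hℓ)
  set T := japFinset d (((k:ℝ)+1)*N) with hT
  have hsum_eq : ∑' ℓ, F ℓ = ∑ ℓ ∈ T, F ℓ := hFS.tsum_eq_sum
  -- constants
  set Cc : ℝ := (((k:ℝ)+1)*N) ^ (2*s₀) * (k:ℝ)^2 with hCc
  have hCcnn : 0 ≤ Cc := by
    apply mul_nonneg (Real.rpow_nonneg (by positivity) _) (sq_nonneg _)
  have step2 : ∀ ℓ ∈ T, F ℓ ≤ Cc * (conv g' fhi ℓ)^2 := by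
    intro ℓ hℓT
    by_cases h : N < jap ℓ
    · have hjℓ : jap ℓ ≤ ((k:ℝ)+1)*N := mem_japFinset.mp hℓT
      have h1 : jap ℓ ^ (2*s₀) ≤ (((k:ℝ)+1)*N) ^ (2*s₀) :=
        Real.rpow_le_rpow (jap_nonneg ℓ) hjℓ (by linarith)
      have h2 : (convIter f k ℓ)^2 ≤ ((k:ℝ) * conv g' fhi ℓ)^2 :=
        pow_le_pow_left₀ (hg0 ℓ) (hkey ℓ h) 2
      have hFval : F ℓ = jap ℓ ^ (2*s₀) * (convIter f k ℓ)^2 := by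
        show (if N < jap ℓ then jap ℓ ^ (2*s₀) * (convIter f k ℓ)^2 else 0) = _
        simp [h]
      rw [hFval]
      calc jap ℓ ^ (2*s₀) * (convIter f k ℓ)^2
          ≤ (((k:ℝ)+1)*N) ^ (2*s₀) * ((k:ℝ) * conv g' fhi ℓ)^2 :=
            mul_le_mul h1 h2 (sq_nonneg _) (Real.rpow_nonneg (by positivity) _)
        _ = Cc * (conv g' fhi ℓ)^2 := by rw [hCc]; ring
    · have hFval : F ℓ = 0 := by
        show (if N < jap ℓ then jap ℓ ^ (2*s₀) * (convIter f k ℓ)^2 else 0) = 0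
        simp [h]
      rw [hFval]
      exact mul_nonneg hCcnn (sq_nonneg _)
  have step3 : ∑ ℓ ∈ T, F ℓ ≤ Cc * ∑ ℓ ∈ T, (conv g' fhi ℓ)^2 := by
    rw [Finset.mul_sum]
    exact Finset.sum_le_sum step2
  have young : ∑ ℓ ∈ T, (conv g' fhi ℓ)^2 ≤ (∑' a, g' a)^2 * ∑' a, (fhi a)^2 :=
    sum_sq_conv_le hg'0 hfhi0 hg'S hfhiS T
  have l1 : ∑' a, g' a ≤ (∑' a, f a)^(k-1) := tsum_convIter_le hf0 hN hfSupp (k-1)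
  have cs : ∑' a, f a ≤ K * W := tsum_le_sqrt_mul_wnorm hf0 hfSupp hss₀ hsum₀ hfs
  have htf_nn : 0 ≤ ∑' a, f a := tsum_nonneg hf0
  have htg'_nn : 0 ≤ ∑' a, g' a := tsum_nonneg hg'0
  have l1' : ∑' a, g' a ≤ (K*W)^(k-1) :=
    le_trans l1 (pow_le_pow_left₀ htf_nn cs (k-1))
  have l1'' : (∑' a, g' a)^2 ≤ ((K*W)^(k-1))^2 := pow_le_pow_left₀ htg'_nn l1' 2
  have hhi : ∑' b, (fhi b)^2 ≤ M ^ (-(2*s)) * W^2 := by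
    rw [hW2]
    exact tsum_sq_hi_le hMpos hspos hfSupp hfs
  have hhinn : 0 ≤ ∑' b, (fhi b)^2 := tsum_nonneg (fun b => sq_nonneg _)
  -- combine
  have main : ∑' ℓ, F ℓ ≤ Cc * (((K*W)^(k-1))^2 * (M ^ (-(2*s)) * W^2)) := by
    rw [hsum_eq]
    apply le_trans step3
    apply mul_le_mul_of_nonneg_left _ hCcnn
    calc ∑ ℓ ∈ T, (conv g' fhi ℓ)^2 ≤ (∑' a, g' a)^2 * ∑' a, (fhi a)^2 := young
      _ ≤ ((K*W)^(k-1))^2 * (M ^ (-(2*s)) * W^2) := by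
          apply mul_le_mul l1'' hhi hhinn (sq_nonneg _)
  -- rewrite the bound as a square
  set Qr : ℝ := (((k:ℝ)+1)*N) ^ s₀ * (k:ℝ) * (K*W)^(k-1) * (M ^ (-s) * W) with hQr
  have hQrnn : 0 ≤ Qr := by
    apply mul_nonneg (mul_nonneg (mul_nonneg (Real.rpow_nonneg (by positivity) _)
      (by positivity)) (pow_nonneg (mul_nonneg hKnn hWnn) _))
    exact mul_nonneg (Real.rpow_nonneg hMpos.le _) hWnn
  have hsq_eq : Cc * (((K*W)^(k-1))^2 * (M ^ (-(2*s)) * W^2)) = Qr^2 := by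
    have e1 : (((k:ℝ)+1)*N) ^ (2*s₀) = ((((k:ℝ)+1)*N) ^ s₀)^2 :=
      (rpow_sq_eq _ (by positivity) s₀).symm
    have e2 : M ^ (-(2*s)) = (M ^ (-s))^2 := by
      rw [rpow_sq_eq _ hMpos.le (-s)]
      congr 1
      ring
    rw [hQr, hCc, e1, e2]
    ring
  have hsqrt : Real.sqrt (∑' ℓ, F ℓ) ≤ Qr := by
    calc Real.sqrt (∑' ℓ, F ℓ) ≤ Real.sqrt (Qr^2) :=
          Real.sqrt_le_sqrt (by rw [← hsq_eq]; exact main)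
      _ = Qr := Real.sqrt_sq hQrnn
  apply le_trans hsqrt
  -- now bound Qr by the target
  have hm2 : (m:ℝ) ≤ (2:ℝ)^m := by
    have := Nat.lt_two_pow_self (n := m)
    have h2 : (m:ℝ) ≤ ((2^m : ℕ):ℝ) := by exact_mod_cast this.le
    rwa [Nat.cast_pow, Nat.cast_ofNat] at h2
  have hk2m : (k:ℝ) ≤ (2:ℝ)^m := by
    have : (k:ℝ) ≤ (m:ℝ) := by exact_mod_cast (by omega : k ≤ m)
    linarith
  have h2mnn : (0:ℝ) ≤ (2:ℝ)^m := by positivity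
  have e3 : (((k:ℝ)+1)*N) ^ s₀ = ((k:ℝ)+1) ^ s₀ * N ^ s₀ :=
    Real.mul_rpow (by positivity) hNpos.le
  have e4 : M ^ (-s) = N ^ (-s) * (k:ℝ) ^ s := by
    rw [hM, div_eq_mul_inv, Real.mul_rpow hNpos.le (by positivity),
      Real.inv_rpow hkpos.le, Real.rpow_neg hkpos.le, inv_inv]
  have e5 : N ^ s₀ * N ^ (-s) = N ^ (s₀ - s) := by
    rw [← Real.rpow_add hNpos, ← sub_eq_add_neg]
  have eW : W^(k-1) * W = W^(m-1) := by
    rw [← pow_succ, Nat.sub_add_cancel hk1]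
  -- coefficient bounds
  have c1 : ((k:ℝ)+1) ^ s₀ ≤ ((2:ℝ) ^ s₀)^m := by
    have hkm : ((k:ℝ)+1) = (m:ℝ) := by rw [hmk]; push_cast; ring
    have b1 : ((k:ℝ)+1) ^ s₀ ≤ ((2:ℝ)^m) ^ s₀ := by
      apply Real.rpow_le_rpow (by positivity) _ hs₀pos.le
      rw [hkm]; exact hm2
    apply le_trans b1
    apply le_of_eq
    rw [← Real.rpow_natCast (2:ℝ) m, ← Real.rpow_natCast ((2:ℝ)^s₀) m,
      ← Real.rpow_mul (by norm_num), ← Real.rpow_mul (by norm_num)]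
    congr 1
    ring
  have c2 : (k:ℝ) * (k:ℝ) ^ s ≤ ((2:ℝ) ^ (1+s))^m := by
    have b0 : (k:ℝ) * (k:ℝ) ^ s = (k:ℝ) ^ ((1:ℝ)+s) := by
      rw [Real.rpow_add hkpos, Real.rpow_one]
    have b1 : (k:ℝ) ^ ((1:ℝ)+s) ≤ ((2:ℝ)^m) ^ ((1:ℝ)+s) :=
      Real.rpow_le_rpow (by positivity) hk2m (by linarith)
    rw [b0]
    apply le_trans b1
    apply le_of_eq
    rw [← Real.rpow_natCast (2:ℝ) m, ← Real.rpow_natCast ((2:ℝ)^(1+s)) m,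
      ← Real.rpow_mul (by norm_num), ← Real.rpow_mul (by norm_num)]
    congr 1
    ring
  have c3 : K^(k-1) ≤ K2^m := by
    calc K^(k-1) ≤ K2^(k-1) := pow_le_pow_left₀ hKnn hKK2 (k-1)
      _ ≤ K2^m := pow_le_pow_right₀ hK2one (by omega)
  have coeff : ((k:ℝ)+1) ^ s₀ * ((k:ℝ) * (k:ℝ) ^ s) * K^(k-1) ≤ C^m := by
    have h1nn : (0:ℝ) ≤ ((k:ℝ)+1) ^ s₀ := Real.rpow_nonneg (by positivity) _
    have h2nn : (0:ℝ) ≤ (k:ℝ) * (k:ℝ) ^ s := by positivity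
    have h3nn : (0:ℝ) ≤ K^(k-1) := pow_nonneg hKnn _
    have hCm : C^m = ((2:ℝ) ^ s₀)^m * ((2:ℝ) ^ (1+s))^m * K2^m := by
      rw [hC, ← mul_pow, ← mul_pow]
      congr 2
      rw [← Real.rpow_add (by norm_num : (0:ℝ) < 2)]
      congr 1
      ring
    rw [hCm]
    apply mul_le_mul (mul_le_mul c1 c2 h2nn (by positivity)) c3 h3nn (by positivity)
  -- final assembly
  have hQreq : Qr = (((k:ℝ)+1) ^ s₀ * ((k:ℝ) * (k:ℝ) ^ s) * K^(k-1)) *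
      N ^ (s₀ - s) * W^(m-1) := by
    rw [hQr, e3, e4, mul_pow K W (k-1), ← e5, ← eW]
    ring
  rw [hQreq]
  have hNnn : (0:ℝ) ≤ N ^ (s₀ - s) := Real.rpow_nonneg hNpos.le _
  have hWmnn : (0:ℝ) ≤ W^(m-1) := pow_nonneg hWnn _
  apply mul_le_mul_of_nonneg_right _ hWmnn
  apply mul_le_mul_of_nonneg_right coeff hNnn
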